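/- For every r0 > 0 there exists a constant C7 >= 0, depending only on r0, such that for all r in (0, r0], all eps0 in (0, 1/2], and all u in [-eps0, eps0]: ( sinh( r(1+u)/2 ) / sinh(r/2) )^2 * ( sinh( r(1+u) ) / sinh(r) ) >= 1 - C7 * eps0. -/

import Mathlib

open Real

/-- Mean value inequality for sinh: for `0 ≤ b ≤ x`, `sinh x - sinh b ≤ (x - b) * cosh x`. -/
lemma sinh_sub_sinh_le (b x : ℝ) (hb : 0 ≤ b) (hbx : b ≤ x) :
    Real.sinh x - Real.sinh b ≤ (x - b) * Real.cosh x := by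
  have hmono : MonotoneOn (fun y : ℝ => y * Real.cosh x - Real.sinh y) (Set.Icc 0 x) := by
    apply monotoneOn_of_deriv_nonneg (convex_Icc 0 x)
    · exact (continuous_id.mul continuous_const).sub Real.continuous_sinh |>.continuousOn
    · intro y _
      exact ((differentiable_id.mul (differentiable_const _)).sub Real.differentiable_sinh) y
        |>.differentiableWithinAt
    · intro y hy
      rw [interior_Icc] at hy
      have : deriv (fun y : ℝ => y * Real.cosh x - Real.sinh y) y
          = Real.cosh x - Real.cosh y := by
        rw [deriv_fun_sub, deriv_fun_mul differentiable_id.differentiableAt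
          (differentiableAt_const _), Real.deriv_sinh]
        · simp
        · exact differentiable_id.differentiableAt.mul (differentiableAt_const _)
        · exact Real.differentiable_sinh.differentiableAt
      rw [this, sub_nonneg, Real.cosh_le_cosh]
      rw [abs_of_nonneg (le_of_lt hy.1), abs_of_nonneg (hb.trans hbx)]
      exact le_of_lt hy.2
  have h := hmono (Set.mem_Icc.2 ⟨hb, hbx⟩) (Set.mem_Icc.2 ⟨hb.trans hbx, le_refl x⟩) hbx
  simp only at h
  linarith

/-- Key ratio bound: if `0 < x ≤ r0`, `0 ≤ b ≤ x` and `x - b ≤ ε * x`, then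
`sinh b / sinh x ≥ 1 - ε * cosh r0`. -/
lemma ratio_lower (r0 : ℝ) (x b ε : ℝ) (hx : 0 < x) (hxr0 : x ≤ r0) (hb : 0 ≤ b)
    (hbx : b ≤ x) (hε : 0 ≤ ε) (hgap : x - b ≤ ε * x) :
    1 - ε * Real.cosh r0 ≤ Real.sinh b / Real.sinh x := by
  have hsx : 0 < Real.sinh x := Real.sinh_pos_iff.2 hx
  rw [le_div_iff₀ hsx]
  have h1 := sinh_sub_sinh_le b x hb hbx
  have h2 : Real.cosh x ≤ Real.cosh r0 := by
    rw [Real.cosh_le_cosh, abs_of_nonneg hx.le, abs_of_nonneg (hx.le.trans hxr0)]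
    exact hxr0
  have h3 : x ≤ Real.sinh x := (Real.self_lt_sinh_iff.2 hx).le
  have hcx : 0 < Real.cosh x := Real.cosh_pos _
  have hgap0 : 0 ≤ x - b := by linarith
  -- sinh b ≥ sinh x - (x-b) cosh x ≥ sinh x - ε x cosh r0 ≥ sinh x (1 - ε cosh r0)
  have h4 : (x - b) * Real.cosh x ≤ ε * x * Real.cosh r0 := by
    calc (x - b) * Real.cosh x ≤ (ε * x) * Real.cosh x := by
          apply mul_le_mul_of_nonneg_right hgap hcx.le
      _ ≤ ε * x * Real.cosh r0 := by
          apply mul_le_mul_of_nonneg_left h2 (by positivity)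
  have hK0 : 0 < Real.cosh r0 := Real.cosh_pos _
  nlinarith [mul_nonneg (sub_nonneg.2 h3) (mul_nonneg hε hK0.le)]

/-- Uniform lower bound on the ratio of Bergman perimeter densities. -/
theorem density_ratio_lower_bound (r0 : ℝ) (hr0 : 0 < r0) :
    ∃ C7 : ℝ, 0 ≤ C7 ∧
      ∀ r : ℝ, 0 < r → r ≤ r0 →
      ∀ eps0 : ℝ, 0 < eps0 → eps0 ≤ 1 / 2 →
      ∀ u : ℝ, -eps0 ≤ u → u ≤ eps0 →
        (Real.sinh (r * (1 + u) / 2) / Real.sinh (r / 2)) ^ 2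
            * (Real.sinh (r * (1 + u)) / Real.sinh r)
          ≥ 1 - C7 * eps0 := by
  refine ⟨3 * Real.cosh r0, by positivity, ?_⟩
  intro r hr hrr0 eps0 hε hε2 u hu1 hu2
  have hsx2 : 0 < Real.sinh (r / 2) := Real.sinh_pos_iff.2 (by linarith)
  have hsx : 0 < Real.sinh r := Real.sinh_pos_iff.2 hr
  have hK : (1:ℝ) ≤ Real.cosh r0 := Real.one_le_cosh r0
  set K := Real.cosh r0 with hKdef
  rcases le_or_gt 0 u with hu0 | hu0
  · -- u ≥ 0 : each ratio is ≥ 1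
    have h1 : Real.sinh (r / 2) ≤ Real.sinh (r * (1 + u) / 2) :=
      Real.sinh_le_sinh.2 (by nlinarith)
    have h2 : Real.sinh r ≤ Real.sinh (r * (1 + u)) :=
      Real.sinh_le_sinh.2 (by nlinarith)
    set a := Real.sinh (r * (1 + u) / 2) / Real.sinh (r / 2)
    set c := Real.sinh (r * (1 + u)) / Real.sinh r
    have ha : (1:ℝ) ≤ a := (one_le_div hsx2).2 h1
    have hc : (1:ℝ) ≤ c := (one_le_div hsx).2 h2
    have ha2 : (1:ℝ) ≤ a ^ 2 := by nlinarith
    have hprod : (1:ℝ) ≤ a ^ 2 * c := le_trans ha2 (by nlinarith)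
    have h3K : (0:ℝ) ≤ 3 * K * eps0 := by positivity
    linarith
  · -- u < 0
    have hb2 : (0:ℝ) ≤ r * (1 + u) / 2 := by nlinarith
    have hbx2 : r * (1 + u) / 2 ≤ r / 2 := by nlinarith
    have hb : (0:ℝ) ≤ r * (1 + u) := by nlinarith
    have hbx : r * (1 + u) ≤ r := by nlinarith
    have ha := ratio_lower r0 (r / 2) (r * (1 + u) / 2) eps0 (by linarith)
      (by linarith) hb2 hbx2 hε.le (by nlinarith)
    have hc := ratio_lower r0 r (r * (1 + u)) eps0 hr hrr0 hb hbx hε.le (by nlinarith)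
    have ha1 : Real.sinh (r * (1 + u) / 2) / Real.sinh (r / 2) ≤ 1 :=
      (div_le_one hsx2).2 (Real.sinh_le_sinh.2 hbx2)
    have hc1 : Real.sinh (r * (1 + u)) / Real.sinh r ≤ 1 :=
      (div_le_one hsx).2 (Real.sinh_le_sinh.2 hbx)
    have ha0 : 0 ≤ Real.sinh (r * (1 + u) / 2) / Real.sinh (r / 2) :=
      div_nonneg (Real.sinh_nonneg_iff.2 hb2) hsx2.le
    have hc0 : 0 ≤ Real.sinh (r * (1 + u)) / Real.sinh r :=
      div_nonneg (Real.sinh_nonneg_iff.2 hb) hsx.le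
    set a := Real.sinh (r * (1 + u) / 2) / Real.sinh (r / 2)
    set c := Real.sinh (r * (1 + u)) / Real.sinh r
    have hδ : 0 ≤ eps0 * K := by positivity
    set δ := eps0 * K with hδdef
    rcases le_or_gt δ 1 with hδ1 | hδ1
    · have hA : (1 - δ) ^ 2 ≤ a ^ 2 := by nlinarith
      have h2' : (1 - δ) ^ 2 * c ≤ a ^ 2 * c := mul_le_mul_of_nonneg_right hA hc0
      have h3' : (1 - δ) ^ 2 * (1 - δ) ≤ (1 - δ) ^ 2 * c :=
        mul_le_mul_of_nonneg_left (by rw [hδdef]; linarith [hc]) (sq_nonneg _)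
      nlinarith [mul_nonneg (sq_nonneg δ) (by linarith : (0:ℝ) ≤ 3 - δ)]
    · have h0 : 0 ≤ a ^ 2 * c := mul_nonneg (sq_nonneg a) hc0
      nlinarith
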